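/- For every n, the quotient of the type Term n of quantum-logic terms in n variables by the equivalence relation 't ≈ s iff eval t U = eval s U for every assignment U : Fin n → Submodule ℂ (EuclideanSpace ℂ (Fin 2))' has cardinality at most (2n+2)^((2n+2)^n). -/

import Mathlib

/-- A quantum-logic term in `n` variables. -/
inductive Term (n : ℕ) : Type
  | var : Fin n → Term n
  | neg : Term n → Term n
  | inf : Term n → Term n → Term n
  | sup : Term n → Term n → Term n

/-- The value of a quantum-logic term under an assignment of subspaces
to the variables.  Negation is interpreted as orthogonal complement. -/
def Term.eval {n : ℕ} {𝕜 E : Type*} [RCLike 𝕜] [NormedAddCommGroup E]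
    [InnerProductSpace 𝕜 E] : Term n → (Fin n → Submodule 𝕜 E) → Submodule 𝕜 E
  | .var i, U => U i
  | .neg t, U => (t.eval U)ᗮ
  | .inf s t, U => s.eval U ⊓ t.eval U
  | .sup s t, U => s.eval U ⊔ t.eval U

/-- Two terms are equivalent iff their values agree on every assignment
of subspaces of `ℂ²` to their variables. -/
def equiv2D (n : ℕ) : Setoid (Term n) where
  r t s := ∀ U : Fin n → Submodule ℂ (EuclideanSpace ℂ (Fin 2)), t.eval U = s.eval U
  iseqv := ⟨fun _ _ => rfl, fun h U => (h U).symm, fun h₁ h₂ U => (h₁ U).trans (h₂ U)⟩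

namespace QLAux

open Module Submodule

noncomputable section

abbrev E2 := EuclideanSpace ℂ (Fin 2)
abbrev L2 := Submodule ℂ E2




lemma finrank_E2 : finrank ℂ E2 = 2 := finrank_euclideanSpace_fin

lemma rank_le2 (a : L2) : finrank ℂ a ≤ 2 := by have := a.finrank_le; rwa [finrank_E2] at this

lemma eq_bot_of_rank0 {a : L2} (h : finrank ℂ a = 0) : a = ⊥ := Submodule.finrank_eq_zero.1 h
lemma eq_top_of_rank2 {a : L2} (h : finrank ℂ a = 2) : a = ⊤ :=
  Submodule.eq_top_of_finrank_eq (by rw [h, finrank_E2])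
lemma rank_orth (a : L2) : finrank ℂ (aᗮ : L2) = 2 - finrank ℂ a := by
  have h := Submodule.finrank_add_finrank_orthogonal a
  rw [finrank_E2] at h; omega

lemma orth_orth (a : L2) : aᗮᗮ = a := Submodule.orthogonal_orthogonal a

lemma inf_orth (a : L2) : a ⊓ aᗮ = ⊥ := a.inf_orthogonal_eq_bot
lemma sup_orth (a : L2) : a ⊔ aᗮ = ⊤ := Submodule.sup_orthogonal_of_hasOrthogonalProjection

lemma line_ne_orth_self {a : L2} (h : finrank ℂ a = 1) : a ≠ aᗮ := by
  intro he
  have h0 : a = ⊥ := by rw [← inf_orth a, ← he, inf_idem]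
  rw [h0, finrank_bot] at h; omega

lemma line_inf {a b : L2} (ha : finrank ℂ a = 1) (hb : finrank ℂ b = 1) (hne : a ≠ b) :
    a ⊓ b = ⊥ := by
  have hle : finrank ℂ ((a ⊓ b : L2)) ≤ 1 := ha ▸ Submodule.finrank_mono inf_le_left
  rcases Nat.lt_or_ge (finrank ℂ ((a ⊓ b : L2))) 1 with h | h
  · exact eq_bot_of_rank0 (by omega)
  · exfalso
    have h1 : finrank ℂ ((a ⊓ b : L2)) = 1 := le_antisymm hle h
    have e1 : a ⊓ b = a := Submodule.eq_of_le_of_finrank_eq inf_le_left (by rw [h1, ha])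
    have e2 : a ⊓ b = b := Submodule.eq_of_le_of_finrank_eq inf_le_right (by rw [h1, hb])
    exact hne (e1 ▸ e2)

lemma line_sup {a b : L2} (ha : finrank ℂ a = 1) (hb : finrank ℂ b = 1) (hne : a ≠ b) :
    a ⊔ b = ⊤ := by
  have h := Submodule.finrank_sup_add_finrank_inf_eq a b
  rw [line_inf ha hb hne, finrank_bot, ha, hb] at h
  exact eq_top_of_rank2 (by omega)

def vv {n : ℕ} (i : Fin n) : E2 := (WithLp.equiv 2 (Fin 2 → ℂ)).symm ![1, ((i : ℕ) + 1 : ℂ)]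

lemma vv_ne_zero {n : ℕ} (i : Fin n) : vv i ≠ 0 := by
  intro h
  have := congrFun (congrArg (WithLp.equiv 2 (Fin 2 → ℂ)) h) 0
  simp [vv] at this

def ll {n : ℕ} (i : Fin n) : L2 := ℂ ∙ (vv i)

lemma rank_ll {n : ℕ} (i : Fin n) : finrank ℂ (ll i : L2) = 1 :=
  finrank_span_singleton (vv_ne_zero i)

lemma ll_inj {n : ℕ} {i j : Fin n} (h : ll i = ll j) : i = j := by
  have hm : vv i ∈ (ℂ ∙ (vv j)) := by
    rw [show (ℂ ∙ (vv j)) = ll j from rfl, ← h]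
    exact Submodule.mem_span_singleton_self (vv i)
  obtain ⟨c, hc⟩ := Submodule.mem_span_singleton.1 hm
  have h0 := congrFun (congrArg (WithLp.equiv 2 (Fin 2 → ℂ)) hc) 0
  have h1 := congrFun (congrArg (WithLp.equiv 2 (Fin 2 → ℂ)) hc) 1
  simp [vv] at h0
  simp [vv, h0, one_mul] at h1
  have : (j : ℕ) = (i : ℕ) := by exact_mod_cast h1
  exact Fin.ext this.symm

lemma ll_ne_orth {n : ℕ} (i j : Fin n) : ll i ≠ (ll j : L2)ᗮ := by
  intro h
  have hm : vv i ∈ (ll j : L2)ᗮ := by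
    rw [← h]; exact Submodule.mem_span_singleton_self (vv i)
  have hz := (Submodule.mem_orthogonal _ _).1 hm (vv j) (Submodule.mem_span_singleton_self _)
  rw [show (inner ℂ (vv j) (vv i) : ℂ) = ∑ k : Fin 2, (starRingEnd ℂ) (vv j k) * (vv i k) from by
    simpa [RCLike.inner_apply, mul_comm] using PiLp.inner_apply (𝕜 := ℂ) (vv j) (vv i)] at hz
  simp [vv, Fin.sum_univ_two] at hz
  have : (1 : ℂ) + ((j : ℕ) + 1) * ((i : ℕ) + 1) ≠ 0 := by
    have : ((1 + ((j:ℕ)+1) * ((i:ℕ)+1) : ℕ) : ℂ) ≠ 0 := by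
      exact Nat.cast_ne_zero.2 (by positivity)
    push_cast at this
    convert this using 2 <;> ring
  exact this (by linear_combination hz)

/-- the side of a line: itself or its orthocomplement -/
def side : Bool → L2 → L2
  | true, a => a
  | false, a => aᗮ

lemma side_orth (b : Bool) (a : L2) : (side b a)ᗮ = side (!b) a := by
  cases b
  · exact orth_orth a
  · rfl

lemma rank_side {a : L2} (h : finrank ℂ a = 1) (b : Bool) : finrank ℂ (side b a : L2) = 1 := by
  cases b
  · rw [show side false a = aᗮ from rfl, rank_orth, h]
  · exact h

lemma side_eq_cases {a a' : L2} {b b' : Bool} (h : side b a = side b' a') :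
    a = a' ∨ a = a'ᗮ := by
  cases b <;> cases b'
  · have h' : aᗮ = a'ᗮ := h
    exact Or.inl (by rw [← orth_orth a, ← orth_orth a', h'])
  · have h' : aᗮ = a' := h
    exact Or.inr (by rw [← h', orth_orth])
  · exact Or.inr h
  · exact Or.inl h

lemma side_inj_bool {a : L2} (h1 : finrank ℂ a = 1) {b b' : Bool}
    (h : side b a = side b' a) : b = b' := by
  cases b <;> cases b'
  · rfl
  · exact absurd h.symm (line_ne_orth_self h1)
  · exact absurd h (line_ne_orth_self h1)
  · rfl

abbrev KK (n : ℕ) := (Fin n × Bool) ⊕ Bool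

instance (n : ℕ) : Nonempty (KK n) := ⟨.inr true⟩

def iota {n : ℕ} : KK n → L2
  | .inl (j, b) => side b (ll j)
  | .inr b => if b then ⊤ else ⊥

variable {n : ℕ}

open Classical in
def rep (U : Fin n → L2) (i : Fin n) : Fin n :=
  (Finset.univ.filter (fun j => U j = U i ∨ U j = (U i)ᗮ)).min'
    ⟨i, by simp⟩

lemma rep_spec (U : Fin n → L2) (i : Fin n) :
    U (rep U i) = U i ∨ U (rep U i) = (U i)ᗮ := by
  classical
  have h := Finset.min'_mem (Finset.univ.filter (fun j => U j = U i ∨ U j = (U i)ᗮ))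
    ⟨i, by simp⟩
  simpa [rep, Finset.mem_filter] using h

lemma rep_congr (U : Fin n → L2) {i j : Fin n} (h : U i = U j ∨ U i = (U j)ᗮ) :
    rep U i = rep U j := by
  classical
  have hset : (Finset.univ.filter (fun k => U k = U i ∨ U k = (U i)ᗮ)) =
      (Finset.univ.filter (fun k => U k = U j ∨ U k = (U j)ᗮ)) := by
    ext k
    simp only [Finset.mem_filter, Finset.mem_univ, true_and]
    rcases h with h | h
    · rw [h]
    · rw [h, orth_orth]; tauto
  simp only [rep, hset]

lemma rep_rep (U : Fin n → L2) (i : Fin n) : rep U (rep U i) = rep U i :=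
  rep_congr U (rep_spec U i)

lemma ll_side_ne {i j : Fin n} {b b' : Bool} (h : side b (ll i) = side b' (ll j)) :
    i = j ∧ b = b' := by
  rcases side_eq_cases h with h2 | h2
  · have hij : i = j := ll_inj h2
    subst hij
    exact ⟨rfl, side_inj_bool (rank_ll i) h⟩
  · exact absurd h2 (ll_ne_orth i j)

lemma reps_ne {U : Fin n → L2} {j j' : Fin n} (h1 : finrank ℂ (U j) = 1)
    (hr : rep U j = j) (hr' : rep U j' = j') {b b' : Bool}
    (hne : ¬ (j = j' ∧ b = b')) : side b (U j) ≠ side b' (U j') := by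
  intro he
  have h2 : U j = U j' ∨ U j = (U j')ᗮ := side_eq_cases he
  have hjj : j = j' := by rw [← hr, ← hr']; exact rep_congr U h2
  subst hjj
  exact hne ⟨rfl, side_inj_bool h1 he⟩

def RR (U : Fin n → L2) (x y : L2) : Prop :=
  (x = ⊥ ∧ y = ⊥) ∨ (x = ⊤ ∧ y = ⊤) ∨
  ∃ j b, finrank ℂ (U j) = 1 ∧ rep U j = j ∧ x = side b (ll j) ∧ y = side b (U j)

lemma rank_of_RR_x {U : Fin n → L2} {x y : L2} (h : RR U x y) :
    (x = ⊥ ∧ y = ⊥) ∨ (x = ⊤ ∧ y = ⊤) ∨ finrank ℂ x = 1 := by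
  rcases h with h | h | ⟨j, b, _, _, hx, _⟩
  · exact Or.inl h
  · exact Or.inr (Or.inl h)
  · exact Or.inr (Or.inr (hx ▸ rank_side (rank_ll j) b))

lemma RR_func {U : Fin n → L2} {x y y' : L2} (h : RR U x y) (h' : RR U x y') : y = y' := by
  have rank_bot : finrank ℂ ((⊥ : L2)) = 0 := finrank_bot ℂ E2
  have rank_top : finrank ℂ ((⊤ : L2)) = 2 := by
    rw [finrank_top]; exact finrank_E2
  rcases h with ⟨hx, hy⟩ | ⟨hx, hy⟩ | ⟨j, b, hj1, hjr, hx, hy⟩ <;>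
    rcases h' with ⟨hx', hy'⟩ | ⟨hx', hy'⟩ | ⟨j', b', hj1', hjr', hx', hy'⟩
  · rw [hy, hy']
  · exact absurd (hx ▸ hx' ▸ rank_top) (by rw [rank_bot]; omega)
  · exact absurd (hx ▸ hx' ▸ rank_side (rank_ll j') b') (by rw [rank_bot]; omega)
  · exact absurd (hx ▸ hx' ▸ rank_bot) (by rw [rank_top]; omega)
  · rw [hy, hy']
  · exact absurd (hx ▸ hx' ▸ rank_side (rank_ll j') b') (by rw [rank_top]; omega)
  · exact absurd (hx' ▸ hx ▸ rank_side (rank_ll j) b) (by rw [rank_bot]; omega)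
  · exact absurd (hx' ▸ hx ▸ rank_side (rank_ll j) b) (by rw [rank_top]; omega)
  · obtain ⟨hjj, hbb⟩ := ll_side_ne (hx ▸ hx')
    subst hjj; subst hbb
    rw [hy, hy']

lemma RR_neg {U : Fin n → L2} {x y : L2} (h : RR U x y) : RR U xᗮ yᗮ := by
  rcases h with ⟨hx, hy⟩ | ⟨hx, hy⟩ | ⟨j, b, hj1, hjr, hx, hy⟩
  · exact Or.inr (Or.inl ⟨by rw [hx, Submodule.bot_orthogonal_eq_top],
      by rw [hy, Submodule.bot_orthogonal_eq_top]⟩)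
  · exact Or.inl ⟨by rw [hx, Submodule.top_orthogonal_eq_bot],
      by rw [hy, Submodule.top_orthogonal_eq_bot]⟩
  · exact Or.inr (Or.inr ⟨j, !b, hj1, hjr, by rw [hx, side_orth], by rw [hy, side_orth]⟩)

lemma RR_inf {U : Fin n → L2} {x y x' y' : L2} (h : RR U x y) (h' : RR U x' y') :
    RR U (x ⊓ x') (y ⊓ y') := by
  rcases h with ⟨hx, hy⟩ | ⟨hx, hy⟩ | ⟨j, b, hj1, hjr, hx, hy⟩
  · exact Or.inl ⟨by rw [hx, bot_inf_eq], by rw [hy, bot_inf_eq]⟩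
  · rwa [hx, hy, top_inf_eq, top_inf_eq]
  · rcases h' with ⟨hx', hy'⟩ | ⟨hx', hy'⟩ | ⟨j', b', hj1', hjr', hx', hy'⟩
    · exact Or.inl ⟨by rw [hx', inf_bot_eq], by rw [hy', inf_bot_eq]⟩
    · rw [hx', hy', inf_top_eq, inf_top_eq]
      exact Or.inr (Or.inr ⟨j, b, hj1, hjr, hx, hy⟩)
    · by_cases hp : j = j' ∧ b = b'
      · obtain ⟨h1, h2⟩ := hp; subst h1; subst h2
        rw [hx, hx', hy, hy', inf_idem, inf_idem]
        exact Or.inr (Or.inr ⟨j, b, hj1, hjr, rfl, rfl⟩)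
      · refine Or.inl ⟨?_, ?_⟩
        · rw [hx, hx']
          refine line_inf (rank_side (rank_ll j) b) (rank_side (rank_ll j') b') ?_
          intro he
          exact hp (ll_side_ne he)
        · rw [hy, hy']
          exact line_inf (rank_side hj1 b) (rank_side hj1' b') (reps_ne hj1 hjr hjr' hp)

lemma RR_sup {U : Fin n → L2} {x y x' y' : L2} (h : RR U x y) (h' : RR U x' y') :
    RR U (x ⊔ x') (y ⊔ y') := by
  rcases h with ⟨hx, hy⟩ | ⟨hx, hy⟩ | ⟨j, b, hj1, hjr, hx, hy⟩
  · rwa [hx, hy, bot_sup_eq, bot_sup_eq]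
  · exact Or.inr (Or.inl ⟨by rw [hx, top_sup_eq], by rw [hy, top_sup_eq]⟩)
  · rcases h' with ⟨hx', hy'⟩ | ⟨hx', hy'⟩ | ⟨j', b', hj1', hjr', hx', hy'⟩
    · rw [hx', hy', sup_bot_eq, sup_bot_eq]
      exact Or.inr (Or.inr ⟨j, b, hj1, hjr, hx, hy⟩)
    · exact Or.inr (Or.inl ⟨by rw [hx', sup_top_eq], by rw [hy', sup_top_eq]⟩)
    · by_cases hp : j = j' ∧ b = b'
      · obtain ⟨h1, h2⟩ := hp; subst h1; subst h2
        rw [hx, hx', hy, hy', sup_idem, sup_idem]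
        exact Or.inr (Or.inr ⟨j, b, hj1, hjr, rfl, rfl⟩)
      · refine Or.inr (Or.inl ⟨?_, ?_⟩)
        · rw [hx, hx']
          refine line_sup (rank_side (rank_ll j) b) (rank_side (rank_ll j') b') ?_
          intro he
          exact hp (ll_side_ne he)
        · rw [hy, hy']
          exact line_sup (rank_side hj1 b) (rank_side hj1' b') (reps_ne hj1 hjr hjr' hp)

open Classical in
def gg (U : Fin n → L2) (i : Fin n) : KK n :=
  if finrank ℂ (U i) = 1 then
    .inl (rep U i, if U (rep U i) = U i then true else false)
  else .inr (if finrank ℂ (U i) = 2 then true else false)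

lemma RR_var (U : Fin n → L2) (i : Fin n) : RR U (iota (gg U i)) (U i) := by
  classical
  by_cases h1 : finrank ℂ (U i) = 1
  · have hjr : finrank ℂ (U (rep U i)) = 1 := by
      rcases rep_spec U i with h | h
      · rw [h, h1]
      · rw [h, rank_orth, h1]
    refine Or.inr (Or.inr ⟨rep U i, if U (rep U i) = U i then true else false,
      hjr, rep_rep U i, ?_, ?_⟩)
    · simp only [gg, if_pos h1, iota]
    · by_cases h2 : U (rep U i) = U i
      · rw [if_pos h2]
        exact h2.symm
      · rcases rep_spec U i with h | h
        · exact absurd h h2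
        · rw [if_neg h2, show side false (U (rep U i)) = (U (rep U i))ᗮ from rfl,
            h, orth_orth]
  · have hle := rank_le2 (U i)
    have : finrank ℂ (U i) = 0 ∨ finrank ℂ (U i) = 2 := by omega
    rcases this with h | h
    · refine Or.inl ⟨?_, eq_bot_of_rank0 h⟩
      simp [gg, if_neg h1, iota, h]
    · refine Or.inr (Or.inl ⟨?_, eq_top_of_rank2 h⟩)
      simp [gg, if_neg h1, iota, h]

lemma RR_eval (U : Fin n → L2) (t : Term n) :
    RR U (t.eval (iota ∘ gg U)) (t.eval U) := by
  induction t with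
  | var i => exact RR_var U i
  | neg t ih => exact RR_neg ih
  | inf s t ihs iht => exact RR_inf ihs iht
  | sup s t ihs iht => exact RR_sup ihs iht

lemma orth_iota (k : KK n) : ∃ k' : KK n, (iota k)ᗮ = iota k' := by
  rcases k with ⟨j, b⟩ | b
  · exact ⟨.inl (j, !b), side_orth b (ll j)⟩
  · cases b
    · exact ⟨.inr true, by simp [iota, Submodule.bot_orthogonal_eq_top]⟩
    · exact ⟨.inr false, by simp [iota, Submodule.top_orthogonal_eq_bot]⟩

lemma eval_mem_range (p : Fin n → KK n) (t : Term n) :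
    t.eval (iota ∘ p) ∈ Set.range (iota (n := n)) := by
  have h := RR_eval (iota ∘ p) t
  rcases h with ⟨_, hy⟩ | ⟨_, hy⟩ | ⟨j, b, _, _, _, hy⟩
  · exact ⟨.inr false, by simp [iota, hy]⟩
  · exact ⟨.inr true, by simp [iota, hy]⟩
  · rw [hy]
    cases b
    · obtain ⟨k', hk'⟩ := orth_iota (p j)
      exact ⟨k', hk'.symm⟩
    · exact ⟨p j, rfl⟩

lemma transfer {t s : Term n}
    (h : ∀ p : Fin n → KK n, t.eval (iota ∘ p) = s.eval (iota ∘ p)) :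
    ∀ U : Fin n → L2, t.eval U = s.eval U := by
  intro U
  have ht := RR_eval U t
  have hs := RR_eval U s
  rw [h (gg U)] at ht
  exact RR_func ht hs

end

end QLAux

theorem card_quotient_equiv2D_le (n : ℕ) :
    Cardinal.mk (Quotient (equiv2D n)) ≤ ((2 * n + 2) ^ ((2 * n + 2) ^ n) : ℕ) := by
  classical
  set Φ : Quotient (equiv2D n) → ((Fin n → QLAux.KK n) → QLAux.KK n) :=
    Quotient.lift
      (fun t (p : Fin n → QLAux.KK n) =>
        Function.invFun (QLAux.iota (n := n)) (t.eval (QLAux.iota ∘ p)))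
      (fun t s h => funext fun p =>
        congrArg (Function.invFun (QLAux.iota (n := n))) (h (QLAux.iota ∘ p))) with hΦ
  have hinj : Function.Injective Φ := by
    intro q q' h
    obtain ⟨t, rfl⟩ := Quotient.exists_rep q
    obtain ⟨s, rfl⟩ := Quotient.exists_rep q'
    apply Quotient.sound
    show ∀ U : Fin n → Submodule ℂ (EuclideanSpace ℂ (Fin 2)), t.eval U = s.eval U
    apply QLAux.transfer
    intro p
    have h2 : Function.invFun (QLAux.iota (n := n)) (t.eval (QLAux.iota ∘ p)) =
        Function.invFun (QLAux.iota (n := n)) (s.eval (QLAux.iota ∘ p)) := by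
      have := congrFun h p
      simpa [hΦ] using this
    have ht := Function.invFun_eq (f := QLAux.iota (n := n)) (QLAux.eval_mem_range p t)
    have hs := Function.invFun_eq (f := QLAux.iota (n := n)) (QLAux.eval_mem_range p s)
    rw [← ht, ← hs, h2]
  calc Cardinal.mk (Quotient (equiv2D n))
      ≤ Cardinal.mk ((Fin n → QLAux.KK n) → QLAux.KK n) := Cardinal.mk_le_of_injective hinj
    _ = ((2 * n + 2) ^ ((2 * n + 2) ^ n) : ℕ) := by
        rw [Cardinal.mk_fintype]
        congr 1
        rw [Fintype.card_fun, Fintype.card_fun]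
        have hK : Fintype.card (QLAux.KK n) = 2 * n + 2 := by
          simp [QLAux.KK, Fintype.card_sum, Fintype.card_prod]
          ring
        rw [hK, Fintype.card_fin]
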